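/- arXiv:1106.4910 — 4 statements merged into one kernel-verified Lean document; each statement's English description precedes it below -/
import Mathlib

section
/- There is an absolute constant c > 0 such that for every integer n > 1 and every Lipschitz map T : [0,1] → ℝⁿ with Lipschitz constant at most 1 (where ℝⁿ carries the Euclidean norm), there exists a unit vector θ ∈ S^{n−1} such that (∫₀¹ ⟨T(x), θ⟩² dx)^{1/2} ≤ c · n^{−3/2}. -/
open MeasureTheory Module

set_option maxHeartbeats 1000000

private lemma grid_near' (m : ℕ) (hm : 1 ≤ m) (x : ℝ) (hx : x ∈ Set.Icc (0:ℝ) 1) :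
    ∃ k : Fin m, |x - (2*(k:ℝ)+1)/(2*m)| ≤ 1/(2*m) := by
  obtain ⟨hx0, hx1⟩ := hx
  have hmpos : (0:ℝ) < m := by exact_mod_cast hm
  set k0 : ℕ := min (Nat.floor (x * m)) (m - 1) with hk0def
  have hk0 : k0 < m := by omega
  refine ⟨⟨k0, hk0⟩, ?_⟩
  have h1 : (k0 : ℝ) ≤ x * m := by
    calc (k0:ℝ) ≤ (Nat.floor (x*m) : ℝ) := by exact_mod_cast min_le_left _ _
    _ ≤ x * m := Nat.floor_le (by positivity)
  have h2 : x * m ≤ k0 + 1 := by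
    rcases le_or_gt (Nat.floor (x * m)) (m - 1) with h | h
    · have hk : k0 = Nat.floor (x * m) := by omega
      rw [hk]
      exact le_of_lt (Nat.lt_floor_add_one _)
    · have hcast : (k0:ℝ) + 1 = m := by
        have : k0 + 1 = m := by omega
        exact_mod_cast this
      rw [hcast]; nlinarith
  rw [abs_le]
  have hmm : (0:ℝ) < 2 * m := by positivity
  constructor
  · have h3 : (2*(k0:ℝ)+1)/(2*↑m) ≤ x + 1/(2*↑m) := by
      rw [div_le_iff₀ hmm, add_mul, one_div, inv_mul_cancel₀ (ne_of_gt hmm)]; nlinarith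
    simp only [Fin.val_mk]
    linarith
  · have h4 : x ≤ ((2*(k0:ℝ)+1)+1)/(2*↑m) := by
      rw [le_div_iff₀ hmm]; nlinarith
    have h5 : ((2*(k0:ℝ)+1)+1)/(2*↑m) = (2*(k0:ℝ)+1)/(2*↑m) + 1/(2*↑m) := by ring
    simp only [Fin.val_mk]
    linarith


/-- **Gohberg–Krein.** There is an absolute constant `c > 0` such that for every `n > 1`
and every Lipschitz map `T : [0,1] → ℝⁿ` with Lipschitz constant at most `1`, there is a
unit vector `θ ∈ Sⁿ⁻¹` with `(∫₀¹ ⟨T x, θ⟩² dx)^{1/2} ≤ c * n^{-3/2}`. -/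
theorem gohberg_krein_projection :
    ∃ c : ℝ, 0 < c ∧
      ∀ (n : ℕ), 1 < n →
        ∀ T : ℝ → EuclideanSpace ℝ (Fin n),
          (∀ x ∈ Set.Icc (0 : ℝ) 1, ∀ y ∈ Set.Icc (0 : ℝ) 1, ‖T x - T y‖ ≤ |x - y|) →
          ∃ θ : EuclideanSpace ℝ (Fin n), ‖θ‖ = 1 ∧
            Real.sqrt (∫ x in Set.Icc (0 : ℝ) 1, (inner ℝ (T x) θ : ℝ) ^ 2) ≤
              c * (n : ℝ) ^ (-(3 / 2) : ℝ) := by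
  refine ⟨3, by norm_num, ?_⟩
  intro n hn T hT
  set m : ℕ := n / 2 with hmdef
  have hm1 : 1 ≤ m := by omega
  have hmn : 2 * m ≤ n := by omega
  have hnm : n ≤ 2 * m + 1 := by omega
  set t : Fin m → ℝ := fun k => (2*(k:ℝ)+1)/(2*m) with htdef
  have htmem : ∀ k : Fin m, t k ∈ Set.Icc (0:ℝ) 1 := by
    intro k
    have hk : (k:ℝ) ≤ m - 1 := by
      have := k.2; have : (k:ℝ) + 1 ≤ m := by exact_mod_cast this
      linarith
    have hmpos : (0:ℝ) < m := by exact_mod_cast hm1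
    constructor
    · positivity
    · rw [div_le_one (by positivity)]; linarith
  set K : Submodule ℝ (EuclideanSpace ℝ (Fin n)) := Submodule.span ℝ (Set.range fun k : Fin m => T (t k)) with hKdef
  have hKrank : finrank ℝ K ≤ m := by
    classical
    calc finrank ℝ K ≤ (Set.range fun k : Fin m => T (t k)).toFinset.card :=
          finrank_span_le_card _
    _ ≤ (Finset.univ : Finset (Fin m)).card := by
          rw [Set.toFinset_range]; exact Finset.card_image_le
    _ = m := by simp
  set E : Submodule ℝ (EuclideanSpace ℝ (Fin n)) := Kᗮ with hEdef
  set d : ℕ := finrank ℝ E with hddef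
  have hsum : finrank ℝ K + d = n := by
    rw [hddef, hEdef, K.finrank_add_finrank_orthogonal, finrank_euclideanSpace_fin]
  have hd1 : 1 ≤ d := by omega
  have hnd : n ≤ 2 * d := by omega
  set b := stdOrthonormalBasis ℝ E with hbdef
  set g : Fin d → EuclideanSpace ℝ (Fin n) := fun j => (b j : EuclideanSpace ℝ (Fin n)) with hgdef
  have hg_on : Orthonormal ℝ g := E.subtypeₗᵢ.orthonormal_comp_iff.mpr b.orthonormal
  have hg_mem : ∀ j, g j ∈ E := fun j => (b j).2
  have hg_unit : ∀ j, ‖g j‖ = 1 := fun j => hg_on.1 j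
  have hmpos : (0:ℝ) < m := by exact_mod_cast hm1
  -- pointwise bound
  have hpoint : ∀ x ∈ Set.Icc (0:ℝ) 1,
      ∑ j, (inner ℝ (T x) (g j) : ℝ)^2 ≤ 1/(4*m^2) := by
    intro x hx
    obtain ⟨k, hk⟩ := grid_near' m hm1 x hx
    set c : Fin d → ℝ := fun j => inner ℝ (T x) (g j) with hcdef
    set v : EuclideanSpace ℝ (Fin n) := ∑ j, c j • g j with hvdef
    have hvE : v ∈ E := Submodule.sum_mem _ fun j _ => Submodule.smul_mem _ _ (hg_mem j)
    have hS : (inner ℝ (T x) v : ℝ) = ∑ j, (c j)^2 := by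
      rw [hvdef, inner_sum]
      refine Finset.sum_congr rfl fun j _ => ?_
      rw [real_inner_smul_right, pow_two]
    have hnv : ‖v‖^2 = ∑ j, (c j)^2 := by
      rw [← real_inner_self_eq_norm_sq, hvdef]
      rw [sum_inner]
      refine Finset.sum_congr rfl fun j _ => ?_
      rw [real_inner_smul_left, hg_on.inner_right_fintype, pow_two]
    have h0 : (inner ℝ (T (t k)) v : ℝ) = 0 := by
      have hmem : T (t k) ∈ K := Submodule.subset_span ⟨k, rfl⟩
      exact hvE _ hmem
    have hlip : ‖T x - T (t k)‖ ≤ 1/(2*m) := by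
      calc ‖T x - T (t k)‖ ≤ |x - t k| := hT x hx (t k) (htmem k)
      _ ≤ 1/(2*m) := hk
    have key : (inner ℝ (T x) v : ℝ) ≤ (1/(2*m)) * ‖v‖ := by
      have : (inner ℝ (T x) v : ℝ) = inner ℝ (T x - T (t k)) v + inner ℝ (T (t k)) v := by
        rw [← inner_add_left, sub_add_cancel]
      rw [this, h0, add_zero]
      calc (inner ℝ (T x - T (t k)) v : ℝ) ≤ ‖T x - T (t k)‖ * ‖v‖ := real_inner_le_norm _ _
      _ ≤ (1/(2*m)) * ‖v‖ := by
          apply mul_le_mul_of_nonneg_right hlip (norm_nonneg _)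
    have hvnn : (0:ℝ) ≤ ‖v‖ := norm_nonneg v
    have ha : (1/(2*(m:ℝ)))^2 = 1/(4*(m:ℝ)^2) := by field_simp; ring
    have hgoal : ∑ j, ((inner ℝ (T x) (g j) : ℝ))^2 = ∑ j, (c j)^2 := rfl
    rw [hgoal]
    nlinarith [key, hS, hnv, hvnn, sq_nonneg (‖v‖ - 1/(2*(m:ℝ))), ha]
  -- integrability
  have hTlip : LipschitzOnWith 1 T (Set.Icc (0:ℝ) 1) := by
    apply LipschitzOnWith.of_dist_le_mul
    intro x hx y hy
    rw [dist_eq_norm, Real.dist_eq, NNReal.coe_one, one_mul]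
    exact hT x hx y hy
  have hTcont : ContinuousOn T (Set.Icc (0:ℝ) 1) := hTlip.continuousOn
  have hFint : ∀ j : Fin d, IntegrableOn (fun x => (inner ℝ (T x) (g j) : ℝ)^2)
      (Set.Icc (0:ℝ) 1) := by
    intro j
    exact ((hTcont.inner continuousOn_const).pow 2).integrableOn_compact isCompact_Icc
  have hvol : (volume (Set.Icc (0:ℝ) 1)).toReal = 1 := by
    simp [Real.volume_Icc]
  have hsumint : ∑ j : Fin d, ∫ x in Set.Icc (0:ℝ) 1, (inner ℝ (T x) (g j) : ℝ)^2
      ≤ 1/(4*m^2) := by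
    rw [← integral_finset_sum _ (fun j _ => hFint j)]
    calc (∫ x in Set.Icc (0:ℝ) 1, ∑ j : Fin d, (inner ℝ (T x) (g j) : ℝ)^2)
        ≤ ∫ _x in Set.Icc (0:ℝ) 1, 1/(4*(m:ℝ)^2) := by
          apply setIntegral_mono_on
          · exact integrable_finset_sum _ (fun j _ => hFint j)
          · exact integrableOn_const (by simp [Real.volume_Icc])
          · exact measurableSet_Icc
          · exact hpoint
    _ = 1/(4*(m:ℝ)^2) := by rw [setIntegral_const, measureReal_def, hvol, one_smul]
  have hnneg : ∀ j : Fin d, 0 ≤ ∫ x in Set.Icc (0:ℝ) 1, (inner ℝ (T x) (g j) : ℝ)^2 := by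
    intro j
    apply setIntegral_nonneg measurableSet_Icc
    intro x _; positivity
  have hdpos : (0:ℝ) < d := by exact_mod_cast hd1
  have hconst : ∑ _j : Fin d, 1/(4*(m:ℝ)^2*(d:ℝ)) = 1/(4*(m:ℝ)^2) := by
    rw [Finset.sum_const, Finset.card_univ, Fintype.card_fin, nsmul_eq_mul]
    field_simp
  have : Nonempty (Fin d) := ⟨⟨0, hd1⟩⟩
  obtain ⟨j, _, hj⟩ := Finset.exists_le_of_sum_le (Finset.univ_nonempty)
    (by rw [hconst]; exact hsumint :
      ∑ j : Fin d, (∫ x in Set.Icc (0:ℝ) 1, (inner ℝ (T x) (g j) : ℝ)^2)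
        ≤ ∑ _j : Fin d, 1/(4*(m:ℝ)^2*(d:ℝ)))
  refine ⟨g j, hg_unit j, ?_⟩
  -- final arithmetic
  have hnR : (0:ℝ) < n := by positivity
  have hrw : (3:ℝ) * (n:ℝ) ^ (-(3/2) : ℝ) =
      Real.sqrt (9 * ((n:ℝ)^3)⁻¹) := by
    have h1 : ((n:ℝ) ^ (-(3/2):ℝ))^2 = ((n:ℝ)^3)⁻¹ := by
      rw [← Real.rpow_natCast ((n:ℝ) ^ (-(3/2):ℝ)) 2, ← Real.rpow_mul (le_of_lt hnR)]
      norm_num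
    rw [show (9:ℝ) * ((n:ℝ)^3)⁻¹ = (3 * (n:ℝ) ^ (-(3/2):ℝ))^2 by rw [mul_pow, h1]; ring,
      Real.sqrt_sq (by positivity)]
  rw [hrw]
  apply Real.sqrt_le_sqrt
  calc (∫ x in Set.Icc (0:ℝ) 1, (inner ℝ (T x) (g j) : ℝ)^2) ≤ 1/(4*(m:ℝ)^2*(d:ℝ)) := hj
  _ ≤ 9 * ((n:ℝ)^3)⁻¹ := by
      have h4m : (n:ℝ) ≤ 4*m := by exact_mod_cast (by omega : n ≤ 4*m)
      have h2d : (n:ℝ) ≤ 2*d := by exact_mod_cast hnd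
      have hnn : (0:ℝ) ≤ n := by positivity
      rw [← div_eq_mul_inv, div_le_div_iff₀ (by positivity) (by positivity), one_mul]
      have hsq : (n:ℝ)^2 ≤ 16*(m:ℝ)^2 := by nlinarith
      nlinarith [mul_le_mul hsq h2d hnn (by positivity : (0:ℝ) ≤ 16*(m:ℝ)^2)]
end

section
/- There is an absolute constant c > 0 such that for every finite connected graph X, every integer n > 1, and every Lipschitz map T : X → ℝⁿ with Lipschitz constant at most 1 (with respect to the shortest-path metric on X and the Euclidean norm on ℝⁿ), there exists a unit vector θ ∈ S^{n−1} such that (∑_{x∈X} ⟨T(x), θ⟩² μ(x))^{1/2} ≤ c · n^{−1/2} · λ_{⌊n/2⌋−1}^{−1/2}, where λ_{⌊n/2⌋−1} is the (⌊n/2⌋−1)-st smallest nonzero eigenvalue of the Laplacian of X (counted with multiplicity). -/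
/-- The graph Laplacian `Δf(x) = 2 (f x - (1/deg x) ∑_{y ∼ x} f y)`. -/
noncomputable def graphLaplacian {V : Type*} [Fintype V] (G : SimpleGraph V)
    [DecidableRel G.Adj] (f : V → ℝ) (x : V) : ℝ :=
  2 * (f x - ((G.degree x : ℝ))⁻¹ * ∑ y ∈ G.neighborFinset x, f y)

/-- The stationary measure of the simple random walk, `μ x = deg x / (2 |E|)`
(note that `2 |E| = ∑_y deg y`). -/
noncomputable def stationaryMeasure {V : Type*} [Fintype V] (G : SimpleGraph V)
    [DecidableRel G.Adj] (x : V) : ℝ :=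
  (G.degree x : ℝ) / (∑ y : V, (G.degree y : ℝ))


namespace ProjAux

open Finset

variable {V : Type} [Fintype V] (G : SimpleGraph V) [DecidableRel G.Adj]

/-- weighted inner product -/
noncomputable def ip (G : SimpleGraph V) [DecidableRel G.Adj] (g h : V → ℝ) : ℝ :=
  ∑ x, g x * h x * stationaryMeasure G x

lemma stationaryMeasure_nonneg (x : V) : 0 ≤ stationaryMeasure G x := by
  unfold stationaryMeasure
  positivity

lemma sum_deg_pos [Nonempty V] (hdeg : ∀ x, 0 < G.degree x) :
    0 < ∑ y : V, (G.degree y : ℝ) := by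
  apply Finset.sum_pos (fun y _ => by exact_mod_cast hdeg y) univ_nonempty

lemma stationaryMeasure_pos [Nonempty V] (hdeg : ∀ x, 0 < G.degree x) (x : V) :
    0 < stationaryMeasure G x := by
  unfold stationaryMeasure
  exact div_pos (by exact_mod_cast hdeg x) (sum_deg_pos G hdeg)

lemma ip_symm (g h : V → ℝ) : ip G g h = ip G h g := by
  unfold ip; exact Finset.sum_congr rfl fun x _ => by ring

lemma ip_nonneg (g : V → ℝ) : 0 ≤ ip G g g :=
  Finset.sum_nonneg fun x _ => mul_nonneg (mul_self_nonneg _) (stationaryMeasure_nonneg G x)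

lemma ip_pos [Nonempty V] (hdeg : ∀ x, 0 < G.degree x) {g : V → ℝ} (hg : g ≠ 0) :
    0 < ip G g g := by
  obtain ⟨x₀, hx₀⟩ := Function.ne_iff.mp hg
  refine Finset.sum_pos' (fun x _ => mul_nonneg (mul_self_nonneg _) (stationaryMeasure_nonneg G x))
    ⟨x₀, Finset.mem_univ _, ?_⟩
  have h1 := stationaryMeasure_pos G hdeg x₀
  have hx : g x₀ ≠ 0 := by simpa using hx₀

  exact mul_pos (mul_self_pos.mpr hx) h1

lemma nbr_swap (u : V → V → ℝ) :
    ∑ x, ∑ y ∈ G.neighborFinset x, u x y = ∑ x, ∑ y ∈ G.neighborFinset x, u y x := by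
  simp only [SimpleGraph.neighborFinset_eq_filter, Finset.sum_filter]
  rw [Finset.sum_comm]
  refine Finset.sum_congr rfl fun x _ => Finset.sum_congr rfl fun y _ => ?_
  exact if_congr (G.adj_comm y x) rfl rfl

lemma ip_sum_left {ι : Type*} (s : Finset ι) (b : ι → ℝ) (F : ι → V → ℝ) (h : V → ℝ) :
    ip G (fun x => ∑ i ∈ s, b i * F i x) h = ∑ i ∈ s, b i * ip G (F i) h := by
  unfold ip
  have h1 : (∑ x, (∑ i ∈ s, b i * F i x) * h x * stationaryMeasure G x)
      = ∑ x, ∑ i ∈ s, b i * (F i x * h x * stationaryMeasure G x) := by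
    refine Finset.sum_congr rfl fun x _ => ?_
    rw [Finset.sum_mul, Finset.sum_mul]
    exact Finset.sum_congr rfl fun i _ => by ring
  beta_reduce
  rw [h1, Finset.sum_comm]
  refine Finset.sum_congr rfl fun i _ => ?_
  rw [Finset.mul_sum]

lemma ip_smul_left (r : ℝ) (g h : V → ℝ) :
    ip G (fun x => r * g x) h = r * ip G g h := by
  unfold ip
  rw [Finset.mul_sum]
  exact Finset.sum_congr rfl fun x _ => by ring

lemma lap_key (g h : V → ℝ) :
    ∑ x, ∑ y ∈ G.neighborFinset x, (g x - g y) * (h x - h y)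
      = ∑ x, (2 * (g x * h x * (G.degree x : ℝ))
          - 2 * ((∑ y ∈ G.neighborFinset x, g y) * h x)) := by
  have h1 : ∑ x, ∑ y ∈ G.neighborFinset x, g x * h y
      = ∑ x, ∑ y ∈ G.neighborFinset x, g y * h x := nbr_swap G _
  have h2 : ∑ x, ∑ y ∈ G.neighborFinset x, g y * h y
      = ∑ x, g x * h x * (G.degree x : ℝ) := by
    rw [nbr_swap G]
    refine Finset.sum_congr rfl fun x _ => ?_
    rw [Finset.sum_const, SimpleGraph.card_neighborFinset_eq_degree, nsmul_eq_mul]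
    ring
  have expand : ∑ x, ∑ y ∈ G.neighborFinset x, (g x - g y) * (h x - h y)
      = ∑ x, ((∑ y ∈ G.neighborFinset x, g x * h x)
            - (∑ y ∈ G.neighborFinset x, g x * h y)
            - (∑ y ∈ G.neighborFinset x, g y * h x)
            + (∑ y ∈ G.neighborFinset x, g y * h y)) := by
    refine Finset.sum_congr rfl fun x _ => ?_
    rw [← Finset.sum_sub_distrib, ← Finset.sum_sub_distrib, ← Finset.sum_add_distrib]
    exact Finset.sum_congr rfl fun y _ => by ring
  have h3 : ∑ x, ∑ y ∈ G.neighborFinset x, g x * h x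
      = ∑ x, g x * h x * (G.degree x : ℝ) := by
    refine Finset.sum_congr rfl fun x _ => ?_
    rw [Finset.sum_const, SimpleGraph.card_neighborFinset_eq_degree, nsmul_eq_mul]
    ring
  have h4 : ∑ x, ∑ y ∈ G.neighborFinset x, g y * h x
      = ∑ x, (∑ y ∈ G.neighborFinset x, g y) * h x := by
    refine Finset.sum_congr rfl fun x _ => ?_
    rw [Finset.sum_mul]
  rw [expand, Finset.sum_add_distrib, Finset.sum_sub_distrib, Finset.sum_sub_distrib,
    h1, h4, h3, h2, Finset.sum_sub_distrib, ← Finset.mul_sum, ← Finset.mul_sum]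
  ring

lemma green [Nonempty V] (hdeg : ∀ x, 0 < G.degree x) (g h : V → ℝ) :
    ip G (graphLaplacian G g) h
      = (∑ y : V, (G.degree y : ℝ))⁻¹
          * ∑ x, ∑ y ∈ G.neighborFinset x, (g x - g y) * (h x - h y) := by
  unfold ip graphLaplacian stationaryMeasure
  rw [lap_key, Finset.mul_sum]
  refine Finset.sum_congr rfl fun x _ => ?_
  have hdx : (G.degree x : ℝ) ≠ 0 := by
    have := hdeg x; positivity
  have hS : (∑ y : V, (G.degree y : ℝ)) ≠ 0 := ne_of_gt (sum_deg_pos G hdeg)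
  field_simp

lemma ip_lap_comm [Nonempty V] (hdeg : ∀ x, 0 < G.degree x) (g h : V → ℝ) :
    ip G (graphLaplacian G g) h = ip G (graphLaplacian G h) g := by
  rw [green G hdeg, green G hdeg]
  congr 1
  refine Finset.sum_congr rfl fun x _ => Finset.sum_congr rfl fun y _ => by ring

lemma ip_lap_nonneg [Nonempty V] (hdeg : ∀ x, 0 < G.degree x) (g : V → ℝ) :
    0 ≤ ip G (graphLaplacian G g) g := by
  rw [green G hdeg]
  refine mul_nonneg (inv_nonneg.mpr (le_of_lt (sum_deg_pos G hdeg))) ?_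
  exact Finset.sum_nonneg fun x _ => Finset.sum_nonneg fun y _ => mul_self_nonneg _

lemma ip_one_one [Nonempty V] (hdeg : ∀ x, 0 < G.degree x) :
    ip G (fun _ => 1) (fun _ => 1) = 1 := by
  unfold ip stationaryMeasure
  simp only [one_mul]
  rw [← Finset.sum_div]
  exact div_self (ne_of_gt (sum_deg_pos G hdeg))

variable {lam : Fin (Fintype.card V - 1) → ℝ} {f : Fin (Fintype.card V - 1) → V → ℝ}

lemma ip_eigen_one [Nonempty V] (hdeg : ∀ x, 0 < G.degree x)
    (hlam0 : ∀ i, lam i ≠ 0)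
    (hLf : ∀ i x, graphLaplacian G (f i) x = lam i * f i x) (i) :
    ip G (f i) (fun _ => 1) = 0 := by
  have h1 : ip G (graphLaplacian G (f i)) (fun _ => 1) = 0 := by
    rw [green G hdeg]
    simp
  have h2 : graphLaplacian G (f i) = fun x => lam i * f i x := funext (hLf i)
  rw [h2, ip_smul_left] at h1
  exact (mul_eq_zero.mp h1).resolve_left (hlam0 i)

lemma ip_eigen_eigen [Nonempty V] (hdeg : ∀ x, 0 < G.degree x)
    (hLf : ∀ i x, graphLaplacian G (f i) x = lam i * f i x) {i j}
    (hij : lam i ≠ lam j) :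
    ip G (f i) (f j) = 0 := by
  have h1 : ip G (graphLaplacian G (f i)) (f j) = ip G (graphLaplacian G (f j)) (f i) :=
    ip_lap_comm G hdeg _ _
  rw [funext (hLf i), funext (hLf j), ip_smul_left, ip_smul_left, ip_symm G (f j) (f i)] at h1
  have h2 : (lam i - lam j) * ip G (f i) (f j) = 0 := by ring_nf; linarith [h1]
  exact (mul_eq_zero.mp h2).resolve_left (sub_ne_zero.mpr hij)

lemma lam_pos [Nonempty V] (hdeg : ∀ x, 0 < G.degree x)
    (hlam0 : ∀ i, lam i ≠ 0) (hli : LinearIndependent ℝ f)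
    (hLf : ∀ i x, graphLaplacian G (f i) x = lam i * f i x) (i) :
    0 < lam i := by
  have hfne : f i ≠ 0 := hli.ne_zero i
  have hpos : 0 < ip G (f i) (f i) := ip_pos G hdeg hfne
  have h1 : 0 ≤ ip G (graphLaplacian G (f i)) (f i) := ip_lap_nonneg G hdeg _
  rw [funext (hLf i), ip_smul_left] at h1
  have : 0 ≤ lam i := by
    by_contra hneg
    push_neg at hneg
    nlinarith
  exact lt_of_le_of_ne this (Ne.symm (hlam0 i))

lemma lap_sum {ι : Type*} (s : Finset ι) (b : ι → ℝ) (F : ι → V → ℝ) (x : V) :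
    graphLaplacian G (fun x => ∑ i ∈ s, b i * F i x) x
      = ∑ i ∈ s, b i * graphLaplacian G (F i) x := by
  unfold graphLaplacian
  have h1 : ∑ y ∈ G.neighborFinset x, ∑ i ∈ s, b i * F i y
      = ∑ i ∈ s, b i * ∑ y ∈ G.neighborFinset x, F i y := by
    rw [Finset.sum_comm]
    exact Finset.sum_congr rfl fun i _ => by rw [Finset.mul_sum]
  beta_reduce
  rw [h1, Finset.mul_sum, mul_sub, Finset.mul_sum, Finset.mul_sum, ← Finset.sum_sub_distrib]
  refine Finset.sum_congr rfl fun i _ => by ring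

lemma poincare [Nonempty V] (hdeg : ∀ x, 0 < G.degree x)
    (hmono : Monotone lam) (hlam0 : ∀ i, lam i ≠ 0) (hli : LinearIndependent ℝ f)
    (hLf : ∀ i x, graphLaplacian G (f i) x = lam i * f i x)
    (idx : Fin (Fintype.card V - 1)) (g : V → ℝ)
    (hg1 : ip G g (fun _ => 1) = 0)
    (hgf : ∀ i : Fin (Fintype.card V - 1), (i : ℕ) < (idx : ℕ) → ip G g (f i) = 0) :
    lam idx * ip G g g ≤ ip G (graphLaplacian G g) g := by
  classical
  set F : Fin (Fintype.card V - 1 + 1) → V → ℝ := Fin.cons (fun _ => 1) f with hF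
  have hcard : Fintype.card V - 1 + 1 = Fintype.card V := Nat.succ_pred_eq_of_pos Fintype.card_pos
  have hiponeone := ip_one_one G hdeg
  have hfone : ∀ i, ip G (f i) (fun _ => 1) = 0 := ip_eigen_one G hdeg hlam0 hLf
  have hsum_one : ∀ c : Fin (Fintype.card V - 1 + 1) → ℝ,
      ip G (fun x => ∑ j, c j * F j x) (fun _ => 1) = c 0 := by
    intro c
    rw [ip_sum_left, Fin.sum_univ_succ]
    simp only [hF, Fin.cons_zero, Fin.cons_succ]
    rw [hiponeone]
    have hz : ∀ i : Fin (Fintype.card V - 1), c i.succ * ip G (f i) (fun _ => 1) = 0 := by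
      intro i; rw [hfone i, mul_zero]
    rw [Finset.sum_congr rfl (fun i _ => hz i), Finset.sum_const, smul_zero]
    ring
  -- linear independence of F
  have hFli : LinearIndependent ℝ F := by
    rw [Fintype.linearIndependent_iff]
    intro c hc
    have hcfun : (fun x => ∑ j, c j * F j x) = fun _ => (0 : ℝ) := by
      funext x
      have := congrFun hc x
      simpa [Finset.sum_apply] using this
    have h0 : c 0 = 0 := by
      rw [← hsum_one c, hcfun]
      unfold ip
      simp
    have hsucc : ∀ i : Fin (Fintype.card V - 1), c i.succ = 0 := by
      have hc2 : ∑ i : Fin (Fintype.card V - 1), c i.succ • f i = 0 := by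
        have h' := hc
        rw [Fin.sum_univ_succ] at h'
        simpa [hF, h0] using h'
      exact fun i => Fintype.linearIndependent_iff.mp hli (fun i => c i.succ) hc2 i
    intro j
    exact Fin.cases h0 hsucc j
  -- spanning
  have hspan : Submodule.span ℝ (Set.range F) = ⊤ := by
    apply hFli.span_eq_top_of_card_eq_finrank
    rw [Fintype.card_fin, Module.finrank_fintype_fun_eq_card, hcard]
  have hg_mem : g ∈ Submodule.span ℝ (Set.range F) := by rw [hspan]; trivial
  obtain ⟨c, hc⟩ := (Submodule.mem_span_range_iff_exists_fun ℝ).mp hg_mem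
  have hcapply : ∀ x, g x = ∑ j, c j * F j x := by
    intro x
    have := congrFun hc x
    simpa [Finset.sum_apply] using this.symm
  have hgsum : g = fun x => ∑ j, c j * F j x := funext hcapply
  have hc0 : c 0 = 0 := by rw [← hsum_one c, ← hgsum, hg1]
  set b : Fin (Fintype.card V - 1) → ℝ := fun i => c i.succ with hb
  have hgb : g = fun x => ∑ i, b i * f i x := by
    funext x
    rw [hcapply x, Fin.sum_univ_succ]
    simp [hF, hc0, hb]
  -- expansions
  have hgg : ip G g g = ∑ i, b i * ip G (f i) g := by
    rw [← ip_sum_left, ← hgb]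
  have hlap : graphLaplacian G g = fun x => ∑ i, (b i * lam i) * f i x := by
    funext x
    conv_lhs => rw [hgb]
    rw [lap_sum]
    refine Finset.sum_congr rfl fun i _ => ?_
    rw [hLf i x]; ring
  have hLgg : ip G (graphLaplacian G g) g = ∑ i, (b i * lam i) * ip G (f i) g := by
    rw [hlap, ip_sum_left]
  have hmaps : ∀ i ∈ (Finset.univ : Finset (Fin (Fintype.card V - 1))),
      lam i ∈ Finset.univ.image lam :=
    fun i _ => Finset.mem_image_of_mem lam (Finset.mem_univ i)
  rw [hgg, hLgg, ← Finset.sum_fiberwise_of_maps_to hmaps (fun i => b i * ip G (f i) g),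
    ← Finset.sum_fiberwise_of_maps_to hmaps (fun i => (b i * lam i) * ip G (f i) g),
    Finset.mul_sum]
  refine Finset.sum_le_sum fun t ht => ?_
  set Bt := Finset.univ.filter (fun i => lam i = t) with hBt
  set gB : V → ℝ := fun x => ∑ i ∈ Bt, b i * f i x with hgB
  have hfi_gt : ∀ i ∈ Bt, ip G (f i) g = ip G (f i) gB := by
    intro i hi
    have hit : lam i = t := (Finset.mem_filter.mp hi).2
    rw [ip_symm, ip_symm G (f i) gB]
    conv_lhs => rw [hgb]
    rw [ip_sum_left, hgB, ip_sum_left]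
    symm
    apply Finset.sum_subset (Finset.filter_subset _ _)
    intro j _ hj
    have hjt : lam j ≠ lam i := by
      rw [hit]
      exact fun hh => hj (Finset.mem_filter.mpr ⟨Finset.mem_univ _, hh⟩)
    rw [ip_eigen_eigen G hdeg hLf hjt, mul_zero]
  have hQ : ∑ i ∈ Bt, b i * ip G (f i) g = ip G gB gB := by
    rw [Finset.sum_congr rfl (fun i hi => by rw [hfi_gt i hi] :
      ∀ i ∈ Bt, b i * ip G (f i) g = b i * ip G (f i) gB), ← ip_sum_left, ← hgB]
  have hQnn : 0 ≤ ∑ i ∈ Bt, b i * ip G (f i) g := hQ ▸ ip_nonneg G gB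
  have hTQ : ∑ i ∈ Bt, (b i * lam i) * ip G (f i) g
      = t * ∑ i ∈ Bt, b i * ip G (f i) g := by
    rw [Finset.mul_sum]
    refine Finset.sum_congr rfl fun i hi => ?_
    have hit : lam i = t := (Finset.mem_filter.mp hi).2
    rw [hit]; ring
  rw [hTQ]
  rcases lt_or_ge t (lam idx) with hlt | hge
  · have hQ0 : ∑ i ∈ Bt, b i * ip G (f i) g = 0 := by
      apply Finset.sum_eq_zero
      intro i hi
      have hit : lam i = t := (Finset.mem_filter.mp hi).2
      have hilt : (i : ℕ) < (idx : ℕ) := by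
        by_contra hcon
        push_neg at hcon
        have := hmono (Fin.le_def.mpr hcon)
        rw [hit] at this
        linarith
      rw [ip_symm, hgf i hilt, mul_zero]
    rw [hQ0]
    simp
  · exact mul_le_mul_of_nonneg_right hge hQnn

end ProjAux

open Finset ProjAux in
/-- **Main theorem.** There is an absolute constant `c > 0` such that for every finite
connected graph `X`, every `n > 1` and every Lipschitz map `T : X → ℝⁿ` (with respect to the
shortest path metric), there is a unit vector `θ ∈ Sⁿ⁻¹` with
`(∑_x ⟨T x, θ⟩² μ(x))^{1/2} ≤ c * n^{-1/2} * λ_{⌊n/2⌋-1}^{-1/2}`, where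
`λ₁ ≤ λ₂ ≤ …` are the nonzero eigenvalues of the Laplacian, with multiplicities.
The eigenvalue list is encoded by the (zero-based) monotone family `lam` together with a
linearly independent family of eigenfunctions `f`, so that `lam ⟨k-1, _⟩ = λ_k`. -/
theorem main_projection_theorem :
    ∃ c : ℝ, 0 < c ∧
      ∀ (V : Type) [Fintype V] (G : SimpleGraph V) [DecidableRel G.Adj],
        G.Connected →
        ∀ (lam : Fin (Fintype.card V - 1) → ℝ) (f : Fin (Fintype.card V - 1) → V → ℝ),
          Monotone lam →
          (∀ i, lam i ≠ 0) →
          LinearIndependent ℝ f →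
          (∀ i x, graphLaplacian G (f i) x = lam i * f i x) →
          ∀ (n : ℕ), 1 < n →
            ∀ (hidx : n / 2 - 1 - 1 < Fintype.card V - 1),
              ∀ T : V → EuclideanSpace ℝ (Fin n),
                (∀ x y : V, ‖T x - T y‖ ≤ (G.dist x y : ℝ)) →
                ∃ θ : EuclideanSpace ℝ (Fin n), ‖θ‖ = 1 ∧
                  Real.sqrt (∑ x : V, (inner ℝ (T x) θ : ℝ) ^ 2 * stationaryMeasure G x) ≤
                    c * (n : ℝ) ^ (-(1 / 2) : ℝ) *
                      (lam ⟨n / 2 - 1 - 1, hidx⟩) ^ (-(1 / 2) : ℝ) := by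
  classical
  refine ⟨2, by norm_num, ?_⟩
  intro V _ G _ hconn lam f hmono hlam0 hli hLf n hn hidx T hT
  have hN2 : 2 ≤ Fintype.card V := by omega
  have : Nontrivial V := Fintype.one_lt_card_iff_nontrivial.mp (by omega)
  have hdeg : ∀ x, 0 < G.degree x := by
    intro x
    rw [SimpleGraph.degree_pos_iff_exists_adj]
    obtain ⟨y, hy⟩ := exists_ne x
    obtain ⟨w⟩ := hconn.preconnected x y
    cases w with
    | nil => exact absurd rfl (Ne.symm hy)
    | cons h _ => exact ⟨_, h⟩
  set m := n / 2 - 1 - 1 with hm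
  set idx : Fin (Fintype.card V - 1) := ⟨m, hidx⟩ with hidx'
  have hlampos : 0 < lam idx := lam_pos G hdeg hlam0 hli hLf idx
  -- constraint vectors
  set φ : Fin (m + 1) → V → ℝ :=
    Fin.cons (fun _ => 1) (fun (j : Fin m) => f ⟨(j : ℕ), by have := j.isLt; omega⟩) with hφ
  set v : Fin (m + 1) → EuclideanSpace ℝ (Fin n) :=
    fun l => ∑ x, (stationaryMeasure G x * φ l x) • T x with hv
  set K := Submodule.span ℝ (Set.range v) with hK
  -- dimension bound
  have hdim : n - (m + 1) ≤ Module.finrank ℝ Kᗮ := by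
    have h1 : Module.finrank ℝ K + Module.finrank ℝ Kᗮ = n := by
      simpa [finrank_euclideanSpace_fin] using K.finrank_add_finrank_orthogonal
    have h2 : Module.finrank ℝ K ≤ m + 1 := by
      have h3 := finrank_range_le_card (R := ℝ) v
      rw [Set.finrank] at h3
      simpa using h3
    omega
  set d := Module.finrank ℝ Kᗮ with hd
  have hd2 : n / 2 ≤ d := by omega
  have hdpos : 0 < d := by omega
  -- orthonormal basis of the orthogonal complement
  set B := stdOrthonormalBasis ℝ (↥Kᗮ) with hB
  set e : Fin d → EuclideanSpace ℝ (Fin n) := fun j => (B j : EuclideanSpace ℝ (Fin n)) with he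
  have heon : Orthonormal ℝ e := by
    constructor
    · intro j
      have h1 := B.orthonormal.1 j
      exact h1
    · intro i j hij
      have h1 := B.orthonormal.2 hij
      simpa [he, Submodule.coe_inner] using h1
  set g : Fin d → V → ℝ := fun j x => inner ℝ (T x) (e j) with hg
  have hconstr : ∀ (j : Fin d) (l : Fin (m + 1)),
      ∑ x, (stationaryMeasure G x * φ l x) * g j x = 0 := by
    intro j l
    have hw : e j ∈ Kᗮ := SetLike.coe_mem (B j)
    have hvK : v l ∈ K := Submodule.subset_span (Set.mem_range_self l)
    have h0 : (inner ℝ (v l) (e j) : ℝ) = 0 := (Submodule.mem_orthogonal K (e j)).mp hw (v l) hvK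
    simp only [hv] at h0
    rw [sum_inner] at h0
    simpa [real_inner_smul_left, hg, Finset.mul_sum, mul_assoc] using h0
  have hpoin : ∀ j, lam idx * ip G (g j) (g j) ≤ ip G (graphLaplacian G (g j)) (g j) := by
    intro j
    apply poincare G hdeg hmono hlam0 hli hLf idx
    · have h1 := hconstr j 0
      simp only [hφ, Fin.cons_zero] at h1
      unfold ip
      rw [← h1]
      exact Finset.sum_congr rfl fun x _ => by ring
    · intro i hi
      have h1 := hconstr j (Fin.succ ⟨(i : ℕ), hi⟩)
      simp only [hφ, Fin.cons_succ, Fin.eta] at h1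
      unfold ip
      rw [← h1]
      exact Finset.sum_congr rfl fun x _ => by ring
  set S := ∑ y : V, (G.degree y : ℝ) with hS
  have hSpos : 0 < S := sum_deg_pos G hdeg
  have hDir : ∑ j, ip G (graphLaplacian G (g j)) (g j) ≤ 1 := by
    calc ∑ j, ip G (graphLaplacian G (g j)) (g j)
        = S⁻¹ * ∑ j, ∑ x, ∑ y ∈ G.neighborFinset x, (g j x - g j y) * (g j x - g j y) := by
          rw [Finset.mul_sum]
          exact Finset.sum_congr rfl fun j _ => green G hdeg _ _
      _ = S⁻¹ * ∑ x, ∑ y ∈ G.neighborFinset x, ∑ j, (g j x - g j y) * (g j x - g j y) := by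
          congr 1
          rw [Finset.sum_comm]
          exact Finset.sum_congr rfl fun x _ => Finset.sum_comm
      _ ≤ S⁻¹ * ∑ x, ∑ y ∈ G.neighborFinset x, (1 : ℝ) := by
          refine mul_le_mul_of_nonneg_left ?_ (inv_nonneg.mpr hSpos.le)
          refine Finset.sum_le_sum fun x _ => Finset.sum_le_sum fun y hy => ?_
          have hady : G.Adj x y := by rwa [← SimpleGraph.mem_neighborFinset]
          have hdist : G.dist x y ≤ 1 := by
            simpa using SimpleGraph.dist_le hady.toWalk
          have hnorm : ‖T x - T y‖ ≤ 1 := le_trans (hT x y) (by exact_mod_cast hdist)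
          have hbes : ∑ j, (inner ℝ (T x - T y) (e j) : ℝ) ^ 2 ≤ ‖T x - T y‖ ^ 2 := by
            have h2 := heon.sum_inner_products_le (T x - T y) (s := Finset.univ)
            simpa [Real.norm_eq_abs, sq_abs, real_inner_comm, mul_comm] using h2
          have heq : ∀ j, g j x - g j y = (inner ℝ (T x - T y) (e j) : ℝ) := by
            intro j
            simp [hg, inner_sub_left]
          calc ∑ j, (g j x - g j y) * (g j x - g j y)
              = ∑ j, (inner ℝ (T x - T y) (e j) : ℝ) ^ 2 :=
                Finset.sum_congr rfl fun j _ => by rw [heq j]; ring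
            _ ≤ ‖T x - T y‖ ^ 2 := hbes
            _ ≤ 1 := by nlinarith [norm_nonneg (T x - T y)]
      _ = S⁻¹ * S := by
          congr 1
          simp [hS, SimpleGraph.card_neighborFinset_eq_degree]
      _ = 1 := inv_mul_cancel₀ (ne_of_gt hSpos)
  have hdR : (0 : ℝ) < d := by exact_mod_cast hdpos
  have hsum : ∑ j, ip G (g j) (g j) ≤ ∑ _j : Fin d, (d : ℝ)⁻¹ * (lam idx)⁻¹ := by
    rw [Finset.sum_const, Finset.card_univ, Fintype.card_fin, nsmul_eq_mul]
    have h1 : lam idx * ∑ j, ip G (g j) (g j) ≤ 1 := by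
      rw [Finset.mul_sum]
      exact le_trans (Finset.sum_le_sum fun j _ => hpoin j) hDir
    have h2 : ∑ j, ip G (g j) (g j) ≤ (lam idx)⁻¹ := by
      rw [inv_eq_one_div, le_div_iff₀ hlampos, mul_comm]
      exact h1
    have h3 : (d : ℝ) * ((d : ℝ)⁻¹ * (lam idx)⁻¹) = (lam idx)⁻¹ := by
      field_simp
    rw [h3]
    exact h2
  have hne : (Finset.univ : Finset (Fin d)).Nonempty := ⟨⟨0, hdpos⟩, Finset.mem_univ _⟩
  obtain ⟨j, -, hj⟩ := Finset.exists_le_of_sum_le hne hsum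
  refine ⟨e j, heon.1 j, ?_⟩
  have hipeq : ∑ x : V, (inner ℝ (T x) (e j) : ℝ) ^ 2 * stationaryMeasure G x
      = ip G (g j) (g j) := by
    unfold ip
    exact Finset.sum_congr rfl fun x _ => by simp only [hg]; ring
  rw [hipeq]
  have hnR : (0 : ℝ) < n := by exact_mod_cast Nat.lt_of_lt_of_le Nat.zero_lt_one hn.le
  have hnd : (n : ℝ) ≤ 4 * d := by
    have : n ≤ 4 * d := by omega
    exact_mod_cast this
  have hinv : (d : ℝ)⁻¹ ≤ 4 / n := by
    rw [inv_eq_one_div, div_le_div_iff₀ hdR hnR]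
    nlinarith
  have hb2 : ip G (g j) (g j) ≤ 4 / n * (lam idx)⁻¹ :=
    le_trans hj (mul_le_mul_of_nonneg_right hinv (inv_nonneg.mpr hlampos.le))
  have hfinal : Real.sqrt (4 / n * (lam idx)⁻¹)
      = 2 * (n : ℝ) ^ (-(1 / 2) : ℝ) * lam idx ^ (-(1 / 2) : ℝ) := by
    rw [div_eq_mul_inv, Real.sqrt_mul (by positivity), Real.sqrt_mul (by norm_num),
      Real.sqrt_inv, Real.sqrt_inv]
    rw [show (4 : ℝ) = 2 ^ 2 by norm_num, Real.sqrt_sq (by norm_num)]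
    rw [Real.rpow_neg (Nat.cast_nonneg n), Real.rpow_neg hlampos.le,
      ← Real.sqrt_eq_rpow, ← Real.sqrt_eq_rpow]
  calc Real.sqrt (ip G (g j) (g j)) ≤ Real.sqrt (4 / n * (lam idx)⁻¹) := Real.sqrt_le_sqrt hb2
    _ = 2 * (n : ℝ) ^ (-(1 / 2) : ℝ) * lam idx ^ (-(1 / 2) : ℝ) := hfinal
end

section
/- There is an absolute constant c > 0 such that for every finite connected graph X, every integer n > 1, and every Lipschitz map T : X → ℝⁿ with Lipschitz constant at most 1 which is centered, i.e. ∑_{x∈X} T(x) μ(x) = 0, there exists a unit vector θ ∈ S^{n−1} such that (∑_{x∈X} ⟨T(x), θ⟩² μ(x))^{1/2} ≤ c · n^{−1/2} · λ_{⌊n/2⌋}^{−1/2}, where λ_{⌊n/2⌋} is the ⌊n/2⌋-th smallest nonzero eigenvalue of the Laplacian of X (counted with multiplicity). -/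
open Finset


noncomputable def wip {V : Type*} [Fintype V] (w : V → ℝ) (f g : V → ℝ) : ℝ :=
  ∑ x, w x * f x * g x

lemma wip_comm {V : Type*} [Fintype V] (w f g : V → ℝ) : wip w f g = wip w g f := by
  unfold wip; apply Finset.sum_congr rfl; intros; ring

lemma wip_term_nonneg {V : Type*} [Fintype V] {w : V → ℝ} (hw : ∀ x, 0 ≤ w x)
    (f : V → ℝ) (x : V) : 0 ≤ w x * f x * f x := by
  have h : w x * f x * f x = w x * (f x)^2 := by ring
  rw [h]; exact mul_nonneg (hw x) (sq_nonneg _)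

lemma wip_nonneg_self {V : Type*} [Fintype V] {w : V → ℝ} (hw : ∀ x, 0 ≤ w x)
    (f : V → ℝ) : 0 ≤ wip w f f :=
  Finset.sum_nonneg fun x _ => wip_term_nonneg hw f x

lemma wip_self_pos {V : Type*} [Fintype V] {w : V → ℝ} (hw : ∀ x, 0 < w x)
    {f : V → ℝ} (hf : f ≠ 0) : 0 < wip w f f := by
  obtain ⟨x, hx⟩ : ∃ x, f x ≠ 0 := by
    by_contra h; push_neg at h; exact hf (funext h)
  have hxx : 0 < w x * f x * f x := by
    have h : w x * f x * f x = w x * (f x)^2 := by ring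
    rw [h]; exact mul_pos (hw x) (by positivity)
  exact lt_of_lt_of_le hxx
    (Finset.single_le_sum (fun y _ => wip_term_nonneg (fun z => (hw z).le) f y) (mem_univ x))

lemma wip_sum_left {V : Type*} [Fintype V] {ι : Type*} (w : V → ℝ) (s : Finset ι)
    (a : ι → ℝ) (f : ι → V → ℝ) (g : V → ℝ) :
    wip w (fun x => ∑ i ∈ s, a i * f i x) g = ∑ i ∈ s, a i * wip w (f i) g := by
  unfold wip
  simp only [Finset.mul_sum, Finset.sum_mul]
  rw [Finset.sum_comm]
  apply Finset.sum_congr rfl; intro i _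
  apply Finset.sum_congr rfl; intros; ring

lemma wip_sum_right {V : Type*} [Fintype V] {ι : Type*} (w : V → ℝ) (s : Finset ι)
    (a : ι → ℝ) (g : V → ℝ) (f : ι → V → ℝ) :
    wip w g (fun x => ∑ i ∈ s, a i * f i x) = ∑ i ∈ s, a i * wip w g (f i) := by
  rw [wip_comm, wip_sum_left]
  exact Finset.sum_congr rfl fun i _ => by rw [wip_comm]


lemma adj_sum_swap {V : Type*} [Fintype V] (G : SimpleGraph V) [DecidableRel G.Adj]
    (F : V → V → ℝ) :
    ∑ x, ∑ y ∈ G.neighborFinset x, F x y = ∑ x, ∑ y ∈ G.neighborFinset x, F y x := by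
  classical
  have h : ∀ (H : V → V → ℝ), ∑ x, ∑ y ∈ G.neighborFinset x, H x y
      = ∑ x, ∑ y, if G.Adj x y then H x y else 0 := by
    intro H
    refine Finset.sum_congr rfl fun x _ => ?_
    rw [SimpleGraph.neighborFinset_eq_filter, Finset.sum_filter]
  rw [h, h, Finset.sum_comm]
  refine Finset.sum_congr rfl fun x _ => Finset.sum_congr rfl fun y _ => ?_
  congr 1
  rw [G.adj_comm]

lemma dirichlet_formula {V : Type*} [Fintype V] (G : SimpleGraph V) [DecidableRel G.Adj]
    (hd : ∀ x, 0 < G.degree x) (f g : V → ℝ) :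
    wip (stationaryMeasure G) (graphLaplacian G f) g =
      (∑ y : V, (G.degree y : ℝ))⁻¹ *
        ∑ x, ∑ y ∈ G.neighborFinset x, (f x - f y) * (g x - g y) := by
  classical
  set S : ℝ := ∑ y : V, (G.degree y : ℝ) with hS
  have hA : wip (stationaryMeasure G) (graphLaplacian G f) g
      = (2 / S) * ∑ x, ∑ y ∈ G.neighborFinset x, (f x - f y) * g x := by
    unfold wip stationaryMeasure graphLaplacian
    rw [Finset.mul_sum]
    refine Finset.sum_congr rfl fun x _ => ?_
    have hdx : ((G.degree x : ℝ)) ≠ 0 := by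
      exact_mod_cast (hd x).ne'
    have h1 : ∑ y ∈ G.neighborFinset x, (f x - f y) * g x
        = ((G.degree x : ℝ) * f x - ∑ y ∈ G.neighborFinset x, f y) * g x := by
      rw [← Finset.sum_mul, Finset.sum_sub_distrib, Finset.sum_const,
        SimpleGraph.card_neighborFinset_eq_degree, nsmul_eq_mul]
    have h2 : (G.degree x : ℝ) * (f x - ((G.degree x : ℝ))⁻¹ * ∑ y ∈ G.neighborFinset x, f y)
        = (G.degree x : ℝ) * f x - ∑ y ∈ G.neighborFinset x, f y := by
      field_simp
    rw [h1, ← h2]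
    ring
  have hswap : ∑ x, ∑ y ∈ G.neighborFinset x, (f x - f y) * g x
      = - ∑ x, ∑ y ∈ G.neighborFinset x, (f x - f y) * g y := by
    have := adj_sum_swap G (fun x y => (f x - f y) * g y)
    rw [this, ← Finset.sum_neg_distrib]
    refine Finset.sum_congr rfl fun x _ => ?_
    rw [← Finset.sum_neg_distrib]
    refine Finset.sum_congr rfl fun y _ => by ring
  have hexp : ∑ x, ∑ y ∈ G.neighborFinset x, (f x - f y) * (g x - g y)
      = (∑ x, ∑ y ∈ G.neighborFinset x, (f x - f y) * g x)
        - ∑ x, ∑ y ∈ G.neighborFinset x, (f x - f y) * g y := by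
    rw [← Finset.sum_sub_distrib]
    refine Finset.sum_congr rfl fun x _ => ?_
    rw [← Finset.sum_sub_distrib]
    refine Finset.sum_congr rfl fun y _ => by ring
  rw [hA, hexp, hswap]
  ring

lemma lap_linear {V : Type*} [Fintype V] (G : SimpleGraph V) [DecidableRel G.Adj]
    {ι : Type*} (s : Finset ι) (a : ι → ℝ) (h : ι → V → ℝ) (x : V) :
    graphLaplacian G (fun y => ∑ i ∈ s, a i * h i y) x
      = ∑ i ∈ s, a i * graphLaplacian G (h i) x := by
  unfold graphLaplacian
  have hsw : ∑ y ∈ G.neighborFinset x, ∑ i ∈ s, a i * h i y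
      = ∑ i ∈ s, a i * ∑ y ∈ G.neighborFinset x, h i y := by
    rw [Finset.sum_comm]
    exact Finset.sum_congr rfl fun i _ => (Finset.mul_sum _ _ _).symm
  rw [hsw, mul_sub, Finset.mul_sum, Finset.mul_sum, Finset.mul_sum, ← Finset.sum_sub_distrib]
  refine Finset.sum_congr rfl fun i _ => by ring

lemma deg_pos_of_connected {V : Type*} [Fintype V] (G : SimpleGraph V) [DecidableRel G.Adj]
    (hc : G.Connected) (hcard : 1 < Fintype.card V) (x : V) : 0 < G.degree x := by
  rw [SimpleGraph.degree_pos_iff_exists_adj]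
  obtain ⟨y, hy⟩ := Fintype.exists_ne_of_one_lt_card hcard x
  obtain ⟨p⟩ := hc.preconnected x y
  cases p with
  | nil => exact absurd rfl hy
  | cons h _ => exact ⟨_, h⟩

lemma key_alg {K : ℕ} (lam : Fin K → ℝ) (hmono : Monotone lam) (m : Fin K)
    (t : Fin K → ℝ)
    (hlt : ∀ i : Fin K, (i : ℕ) < (m : ℕ) → t i = 0)
    (hclass : ∀ l : ℝ, 0 ≤ ∑ i ∈ Finset.univ.filter (fun i => lam i = l), t i) :
    lam m * ∑ i, t i ≤ ∑ i, lam i * t i := by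
  classical
  rw [← sub_nonneg]
  have h : ∑ i, lam i * t i - lam m * ∑ i, t i = ∑ i, (lam i - lam m) * t i := by
    rw [Finset.mul_sum, ← Finset.sum_sub_distrib]
    exact Finset.sum_congr rfl fun i _ => by ring
  rw [h]
  rw [← Finset.sum_fiberwise_of_maps_to (g := lam) (t := Finset.univ.image lam)
      (fun i _ => Finset.mem_image_of_mem lam (Finset.mem_univ i))]
  apply Finset.sum_nonneg
  intro l _
  have hfib : ∑ i ∈ Finset.univ.filter (fun i => lam i = l), (lam i - lam m) * t i
      = (l - lam m) * ∑ i ∈ Finset.univ.filter (fun i => lam i = l), t i := by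
    rw [Finset.mul_sum]
    refine Finset.sum_congr rfl fun i hi => ?_
    rw [(Finset.mem_filter.mp hi).2]
  rw [hfib]
  rcases le_or_gt (lam m) l with hle | hlt'
  · exact mul_nonneg (by linarith) (hclass l)
  · have hz : ∑ i ∈ Finset.univ.filter (fun i => lam i = l), t i = 0 := by
      apply Finset.sum_eq_zero
      intro i hi
      have hil : lam i = l := (Finset.mem_filter.mp hi).2
      apply hlt
      by_contra hge
      push_neg at hge
      have : lam m ≤ lam i := hmono (by exact_mod_cast hge)
      rw [hil] at this; linarith
    rw [hz, mul_zero]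

lemma lap_symm {V : Type*} [Fintype V] (G : SimpleGraph V) [DecidableRel G.Adj]
    (hd : ∀ x, 0 < G.degree x) (p q : V → ℝ) :
    wip (stationaryMeasure G) (graphLaplacian G p) q
      = wip (stationaryMeasure G) (graphLaplacian G q) p := by
  rw [dirichlet_formula G hd, dirichlet_formula G hd]
  congr 1
  refine Finset.sum_congr rfl fun x _ => Finset.sum_congr rfl fun y _ => by ring

lemma wip_eig {V : Type*} [Fintype V] (G : SimpleGraph V) [DecidableRel G.Adj]
    {K : ℕ} {lam : Fin K → ℝ} {f : Fin K → V → ℝ}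
    (heig : ∀ i x, graphLaplacian G (f i) x = lam i * f i x) (i : Fin K) (q : V → ℝ) :
    wip (stationaryMeasure G) (graphLaplacian G (f i)) q
      = lam i * wip (stationaryMeasure G) (f i) q := by
  unfold wip
  rw [Finset.mul_sum]
  refine Finset.sum_congr rfl fun x _ => ?_
  rw [heig i x]; ring

lemma eig_orth {V : Type*} [Fintype V] (G : SimpleGraph V) [DecidableRel G.Adj]
    (hd : ∀ x, 0 < G.degree x) {K : ℕ} {lam : Fin K → ℝ} {f : Fin K → V → ℝ}
    (heig : ∀ i x, graphLaplacian G (f i) x = lam i * f i x) {i j : Fin K}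
    (hne : lam i ≠ lam j) : wip (stationaryMeasure G) (f i) (f j) = 0 := by
  have e1 : lam i * wip (stationaryMeasure G) (f i) (f j)
      = lam j * wip (stationaryMeasure G) (f i) (f j) := by
    rw [← wip_eig G heig i (f j), lap_symm G hd, wip_eig G heig j (f i),
      wip_comm _ (f j) (f i)]
  have := sub_eq_zero.mpr e1
  rw [← sub_mul] at this
  rcases mul_eq_zero.mp this with h | h
  · exact absurd (sub_eq_zero.mp h) hne
  · exact h

lemma spectral_lower_bound {V : Type*} [Fintype V] (G : SimpleGraph V) [DecidableRel G.Adj]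
    (hd : ∀ x, 0 < G.degree x) {K : ℕ} (lam : Fin K → ℝ) (f : Fin K → V → ℝ)
    (hmono : Monotone lam) (heig : ∀ i x, graphLaplacian G (f i) x = lam i * f i x)
    (m : Fin K) (a : Fin K → ℝ)
    (hg : ∀ i : Fin K, (i : ℕ) < (m : ℕ) →
      wip (stationaryMeasure G) (f i) (fun x => ∑ j, a j * f j x) = 0) :
    lam m * wip (stationaryMeasure G) (fun x => ∑ j, a j * f j x) (fun x => ∑ j, a j * f j x)
      ≤ wip (stationaryMeasure G)
          (graphLaplacian G (fun x => ∑ j, a j * f j x)) (fun x => ∑ j, a j * f j x) := by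
  classical
  set μ := stationaryMeasure G with hμ
  set g : V → ℝ := fun x => ∑ j, a j * f j x with hgdef
  have hμ0 : ∀ x, 0 ≤ μ x := by
    intro x
    unfold μ
    unfold stationaryMeasure
    positivity
  set t : Fin K → ℝ := fun i => a i * wip μ (f i) g with ht
  have htot : wip μ g g = ∑ i, t i := wip_sum_left μ Finset.univ a f g
  have hlap : wip μ (graphLaplacian G g) g = ∑ i, lam i * t i := by
    have hlg : graphLaplacian G g = fun x => ∑ i, (a i * lam i) * f i x := by
      funext x
      rw [hgdef, lap_linear G Finset.univ a f x]
      refine Finset.sum_congr rfl fun i _ => ?_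
      rw [heig i x]; ring
    rw [hlg]
    rw [wip_sum_left μ Finset.univ (fun i => a i * lam i) f g]
    refine Finset.sum_congr rfl fun i _ => by rw [ht]; ring
  rw [htot, hlap]
  apply key_alg lam hmono m t
  · intro i hi
    rw [ht]
    simp only
    rw [hg i hi, mul_zero]
  · intro l
    set C := Finset.univ.filter (fun i => lam i = l) with hC
    set w : V → ℝ := fun x => ∑ i ∈ C, a i * f i x with hw
    have h1 : ∑ i ∈ C, t i = wip μ w g := (wip_sum_left μ C a f g).symm
    have h2 : wip μ w g = ∑ j, a j * wip μ w (f j) := wip_sum_right μ Finset.univ a w f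
    have h3 : ∀ j : Fin K, j ∉ C → a j * wip μ w (f j) = 0 := by
      intro j hj
      have hjl : lam j ≠ l := by
        intro hh
        exact hj (Finset.mem_filter.mpr ⟨Finset.mem_univ j, hh⟩)
      have : wip μ w (f j) = 0 := by
        rw [hw, wip_sum_left μ C a f (f j)]
        apply Finset.sum_eq_zero
        intro i hi
        have hil : lam i = l := (Finset.mem_filter.mp hi).2
        rw [eig_orth G hd heig (by rw [hil]; exact fun hh => hjl hh.symm), mul_zero]
      rw [this, mul_zero]
    have h4 : wip μ w g = ∑ j ∈ C, a j * wip μ w (f j) := by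
      rw [h2]
      exact (Finset.sum_subset (Finset.subset_univ C) (fun j _ hj => h3 j hj)).symm
    have h5 : ∑ j ∈ C, a j * wip μ w (f j) = wip μ w w := by
      rw [← wip_sum_right μ C a w f, hw]
    rw [h1, h4, h5]
    exact wip_nonneg_self hμ0 w


set_option maxHeartbeats 2000000 in
/-- **Mean-zero version of the main theorem.** There is an absolute constant `c > 0` such that
for every finite connected graph `X`, every `n > 1` and every Lipschitz map `T : X → ℝⁿ`
(with respect to the shortest path metric) which is centered, `∑_x μ(x) T x = 0`, there is a
unit vector `θ ∈ Sⁿ⁻¹` with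
`(∑_x ⟨T x, θ⟩² μ(x))^{1/2} ≤ c * n^{-1/2} * λ_{⌊n/2⌋}^{-1/2}`, where
`λ₁ ≤ λ₂ ≤ …` are the nonzero eigenvalues of the Laplacian, with multiplicities.
The eigenvalue list is encoded by the (zero-based) monotone family `lam` together with a
linearly independent family of eigenfunctions `f`, so that `lam ⟨k-1, _⟩ = λ_k`. -/
theorem main_projection_theorem_mean_zero :
    ∃ c : ℝ, 0 < c ∧
      ∀ (V : Type) [Fintype V] (G : SimpleGraph V) [DecidableRel G.Adj],
        G.Connected →
        ∀ (lam : Fin (Fintype.card V - 1) → ℝ) (f : Fin (Fintype.card V - 1) → V → ℝ),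
          Monotone lam →
          (∀ i, lam i ≠ 0) →
          LinearIndependent ℝ f →
          (∀ i x, graphLaplacian G (f i) x = lam i * f i x) →
          ∀ (n : ℕ), 1 < n →
            ∀ (hidx : n / 2 - 1 < Fintype.card V - 1),
              ∀ T : V → EuclideanSpace ℝ (Fin n),
                (∀ x y : V, ‖T x - T y‖ ≤ (G.dist x y : ℝ)) →
                (∑ x : V, stationaryMeasure G x • T x) = 0 →
                ∃ θ : EuclideanSpace ℝ (Fin n), ‖θ‖ = 1 ∧
                  Real.sqrt (∑ x : V, (inner ℝ (T x) θ : ℝ) ^ 2 * stationaryMeasure G x) ≤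
                    c * (n : ℝ) ^ (-(1 / 2) : ℝ) *
                      (lam ⟨n / 2 - 1, hidx⟩) ^ (-(1 / 2) : ℝ) := by
  
  classical
  refine ⟨2, by norm_num, ?_⟩
  intro V _ G _ hconn lam f hmono hne hli heig n hn hidx T hlip hcent
  have hK : 0 < Fintype.card V - 1 := Nat.lt_of_le_of_lt (Nat.zero_le _) hidx
  have hcard2 : 1 < Fintype.card V := by omega
  haveI : Nonempty V := Fintype.card_pos_iff.mp (by omega)
  have hd : ∀ x, 0 < G.degree x := deg_pos_of_connected G hconn hcard2
  have hS : 0 < ∑ y : V, (G.degree y : ℝ) :=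
    Finset.sum_pos (fun y _ => by exact_mod_cast hd y) univ_nonempty
  have hμpos : ∀ x, 0 < stationaryMeasure G x := fun x => div_pos (by exact_mod_cast hd x) hS
  set one : V → ℝ := fun _ => 1 with honedef
  have hone0 : one ≠ 0 := by
    intro h
    obtain ⟨x⟩ := (inferInstance : Nonempty V)
    have := congrFun h x
    simp [honedef] at this
  have h11 : 0 < wip (stationaryMeasure G) one one := wip_self_pos hμpos hone0
  -- eigenfunctions are orthogonal to constants
  have hf1 : ∀ i, wip (stationaryMeasure G) (f i) one = 0 := by
    intro i
    have h1 : wip (stationaryMeasure G) (graphLaplacian G (f i)) one = 0 := by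
      rw [dirichlet_formula G hd]
      have : ∀ x : V, ∑ y ∈ G.neighborFinset x, (f i x - f i y) * (one x - one y) = 0 := by
        intro x
        apply Finset.sum_eq_zero
        intro y _
        simp [honedef]
      rw [Finset.sum_congr rfl (fun x _ => this x), Finset.sum_const, smul_zero, mul_zero]
    rw [wip_eig G heig i one] at h1
    rcases mul_eq_zero.mp h1 with h | h
    · exact absurd h (hne i)
    · exact h
  -- eigenvalues are positive
  have hlam_pos : ∀ i, 0 < lam i := by
    intro i
    have h1 : 0 ≤ wip (stationaryMeasure G) (graphLaplacian G (f i)) (f i) := by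
      rw [dirichlet_formula G hd]
      apply mul_nonneg (inv_nonneg.mpr hS.le)
      exact Finset.sum_nonneg fun x _ => Finset.sum_nonneg fun y _ => mul_self_nonneg _
    rw [wip_eig G heig i (f i)] at h1
    have h2 : 0 < wip (stationaryMeasure G) (f i) (f i) := wip_self_pos hμpos (hli.ne_zero i)
    rcases (hne i).lt_or_gt with h | h
    · exfalso; nlinarith
    · exact h
  -- basis of V → ℝ given by constants and eigenfunctions
  set bfam : Option (Fin (Fintype.card V - 1)) → (V → ℝ) := fun o => o.elim one f with hbfamdef
  have hbli : LinearIndependent ℝ bfam := by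
    rw [linearIndependent_option]
    refine ⟨hli, ?_⟩
    intro hmem
    obtain ⟨c, hc⟩ := (Submodule.mem_span_range_iff_exists_fun ℝ).mp hmem
    have hfun : one = fun x => ∑ i, c i * f i x := by
      funext x
      have h := congrFun hc x
      simp only [hbfamdef, Finset.sum_apply, Pi.smul_apply, smul_eq_mul,
        Function.comp_apply, Option.elim] at h
      exact h.symm
    have : wip (stationaryMeasure G) one one = 0 := by
      rw [show wip (stationaryMeasure G) one one = wip (stationaryMeasure G) (fun x => ∑ i, c i * f i x) one by rw [← hfun]]
      rw [wip_sum_left]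
      exact Finset.sum_eq_zero fun i _ => by rw [hf1 i, mul_zero]
    linarith
  have hcardeq : Fintype.card (Option (Fin (Fintype.card V - 1))) = Module.finrank ℝ (V → ℝ) := by
    rw [Module.finrank_pi]
    simp only [Fintype.card_option, Fintype.card_fin]
    omega
  set B := basisOfLinearIndependentOfCardEqFinrank hbli hcardeq with hBdef
  -- representation of mean-zero functions
  have hrepr : ∀ q : V → ℝ, wip (stationaryMeasure G) one q = 0 →
      ∃ a : Fin (Fintype.card V - 1) → ℝ, q = fun x => ∑ i, a i * f i x := by
    intro q hq
    set A : Option (Fin (Fintype.card V - 1)) → ℝ := fun o => B.repr q o with hAdef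
    have hq1 : q = fun x => ∑ o : Option (Fin (Fintype.card V - 1)), A o * bfam o x := by
      funext x
      rw [show q = ∑ o : Option (Fin (Fintype.card V - 1)), A o • B o from (B.sum_repr q).symm]
      rw [hBdef, coe_basisOfLinearIndependentOfCardEqFinrank]
      simp [Finset.sum_apply]
    have hAnone : A none = 0 := by
      have h2 : wip (stationaryMeasure G) one q = A none * wip (stationaryMeasure G) one one := by
        rw [show wip (stationaryMeasure G) one q = wip (stationaryMeasure G) one (fun x => ∑ o : Option (Fin (Fintype.card V - 1)), A o * bfam o x)
          by rw [← hq1]]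
        rw [wip_sum_right, Fintype.sum_option]
        have : ∀ i : Fin (Fintype.card V - 1), A (some i) * wip (stationaryMeasure G) one (bfam (some i)) = 0 := by
          intro i
          rw [show bfam (some i) = f i from rfl, wip_comm, hf1 i, mul_zero]
        rw [Finset.sum_congr rfl (fun i _ => this i), Finset.sum_const, smul_zero, add_zero]
        rfl
      rw [hq] at h2
      have := h2.symm
      rcases mul_eq_zero.mp this with h | h
      · exact h
      · linarith
    refine ⟨fun i => A (some i), ?_⟩
    funext x
    rw [hq1]
    simp only [Fintype.sum_option, hAnone, zero_mul, zero_add, hbfamdef, Option.elim]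
  -- the ℝⁿ side
  set vv : Fin (n / 2 - 1) → EuclideanSpace ℝ (Fin n) := fun i =>
    ∑ x : V, ((stationaryMeasure G) x * f ⟨i.val, lt_trans i.2 hidx⟩ x) • T x with hvvdef
  set sp := Submodule.span ℝ (Set.range vv) with hspdef
  set W := spᗮ with hWdef
  have hsprank : Module.finrank ℝ sp ≤ n / 2 - 1 := by
    have := finrank_range_le_card (R := ℝ) vv
    simpa [Set.finrank, Fintype.card_fin] using this
  have hfr : Module.finrank ℝ sp + Module.finrank ℝ W = n := by
    rw [hWdef, Submodule.finrank_add_finrank_orthogonal sp, finrank_euclideanSpace_fin]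
  set d := Module.finrank ℝ W with hddef
  have hdlow : n - (n / 2 - 1) ≤ d := by omega
  have hd0 : 0 < d := by omega
  set u := stdOrthonormalBasis ℝ W with hudef
  set EE : Fin d → EuclideanSpace ℝ (Fin n) := fun j => ((u j : W) : EuclideanSpace ℝ (Fin n)) with hEEdef
  have honE : Orthonormal ℝ EE := by
    rw [orthonormal_iff_ite]
    intro i j
    have h := orthonormal_iff_ite.mp u.orthonormal i j
    rw [← Submodule.coe_inner]
    exact_mod_cast h
  -- total energy bound
  set Q : EuclideanSpace ℝ (Fin n) → ℝ := fun θ =>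
    (∑ y : V, (G.degree y : ℝ))⁻¹ * ∑ x : V, ∑ y ∈ G.neighborFinset x, (inner ℝ (T x - T y) θ : ℝ) ^ 2 with hQdef
  have hQsum : ∑ j, Q (EE j) ≤ 1 := by
    have hswap : ∑ j, Q (EE j)
        = (∑ y : V, (G.degree y : ℝ))⁻¹ * ∑ x : V, ∑ y ∈ G.neighborFinset x,
            ∑ j, (inner ℝ (T x - T y) (EE j) : ℝ) ^ 2 := by
      rw [← Finset.mul_sum]
      congr 1
      rw [Finset.sum_comm]
      refine Finset.sum_congr rfl fun x _ => ?_
      rw [Finset.sum_comm]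
    rw [hswap]
    have hpt : ∀ x y : V, y ∈ G.neighborFinset x →
        ∑ j, (inner ℝ (T x - T y) (EE j) : ℝ) ^ 2 ≤ 1 := by
      intro x y hy
      have hb := Orthonormal.sum_inner_products_le (s := Finset.univ) (T x - T y) honE
      have hb' : ∑ j, (inner ℝ (T x - T y) (EE j) : ℝ) ^ 2 ≤ ‖T x - T y‖ ^ 2 := by
        refine le_trans (le_of_eq ?_) hb
        refine Finset.sum_congr rfl fun j _ => ?_
        rw [real_inner_comm, Real.norm_eq_abs, sq_abs]
      have hadj : G.Adj x y := (SimpleGraph.mem_neighborFinset G x y).mp hy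
      have hdist : (G.dist x y : ℝ) ≤ 1 := by
        rw [SimpleGraph.dist_eq_one_iff_adj.mpr hadj]; norm_num
      have hle1 : ‖T x - T y‖ ≤ 1 := le_trans (hlip x y) hdist
      have : ‖T x - T y‖ ^ 2 ≤ 1 := by nlinarith [norm_nonneg (T x - T y)]
      linarith
    calc (∑ y : V, (G.degree y : ℝ))⁻¹ * ∑ x : V, ∑ y ∈ G.neighborFinset x,
          ∑ j, (inner ℝ (T x - T y) (EE j) : ℝ) ^ 2
        ≤ (∑ y : V, (G.degree y : ℝ))⁻¹ * ∑ x : V, ∑ y ∈ G.neighborFinset x, (1 : ℝ) := by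
          apply mul_le_mul_of_nonneg_left _ (inv_nonneg.mpr hS.le)
          exact Finset.sum_le_sum fun x _ => Finset.sum_le_sum fun y hy => hpt x y hy
      _ = (∑ y : V, (G.degree y : ℝ))⁻¹ * (∑ y : V, (G.degree y : ℝ)) := by
          congr 1
          refine Finset.sum_congr rfl fun x _ => ?_
          rw [Finset.sum_const, SimpleGraph.card_neighborFinset_eq_degree, nsmul_eq_mul, mul_one]
      _ = 1 := inv_mul_cancel₀ hS.ne'
  -- choose a good direction
  haveI : Nonempty (Fin d) := Fin.pos_iff_nonempty.mp hd0
  have hex : ∃ j ∈ Finset.univ, Q (EE j) ≤ (d : ℝ)⁻¹ := by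
    apply Finset.exists_le_of_sum_le (Finset.univ_nonempty (α := Fin d))
    calc ∑ j, Q (EE j) ≤ 1 := hQsum
      _ = ∑ _j : Fin d, (d : ℝ)⁻¹ := by
          rw [Finset.sum_const, Finset.card_univ, Fintype.card_fin, nsmul_eq_mul,
            mul_inv_cancel₀ (by exact_mod_cast hd0.ne' : (d : ℝ) ≠ 0)]
  obtain ⟨j, _, hQj⟩ := hex
  set θ : EuclideanSpace ℝ (Fin n) := EE j with hθdef
  refine ⟨θ, honE.1 j, ?_⟩
  have hθW : θ ∈ W := (u j).2
  have hvθ : ∀ i : Fin (n / 2 - 1), (inner ℝ (vv i) θ : ℝ) = 0 := fun i =>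
    (Submodule.mem_orthogonal sp θ).mp hθW (vv i) (Submodule.subset_span (Set.mem_range_self i))
  set g : V → ℝ := fun x => (inner ℝ (T x) θ : ℝ) with hgdef
  have hgmean : wip (stationaryMeasure G) one g = 0 := by
    have h1 : wip (stationaryMeasure G) one g = (inner ℝ (∑ x : V, (stationaryMeasure G) x • T x) θ : ℝ) := by
      rw [sum_inner]
      unfold wip
      refine Finset.sum_congr rfl fun x _ => ?_
      rw [real_inner_smul_left, honedef]
      simp [hgdef]
    rw [h1, hcent, inner_zero_left]
  obtain ⟨a, hga⟩ := hrepr g hgmean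
  set m : Fin (Fintype.card V - 1) := ⟨n / 2 - 1, hidx⟩ with hmdef
  have horth : ∀ i : Fin (Fintype.card V - 1), (i : ℕ) < (m : ℕ) → wip (stationaryMeasure G) (f i) (fun x => ∑ k, a k * f k x) = 0 := by
    intro i hi
    rw [← hga]
    have him : (i : ℕ) < n / 2 - 1 := hi
    have h1 : wip (stationaryMeasure G) (f i) g = (inner ℝ (vv ⟨i.val, him⟩) θ : ℝ) := by
      rw [hvvdef]
      simp only
      rw [sum_inner]
      unfold wip
      refine Finset.sum_congr rfl fun x _ => ?_
      rw [real_inner_smul_left]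
    rw [h1, hvθ]
  have hmain := spectral_lower_bound G hd lam f hmono heig m a horth
  rw [← hga] at hmain
  have hQg : wip (stationaryMeasure G) (graphLaplacian G g) g = Q θ := by
    rw [dirichlet_formula G hd, hQdef]
    congr 1
    refine Finset.sum_congr rfl fun x _ => Finset.sum_congr rfl fun y _ => ?_
    rw [inner_sub_left, hgdef]
    ring
  rw [hQg] at hmain
  -- put the estimates together
  set L := lam m with hLdef
  have hL : 0 < L := hlam_pos m
  have hn2d : (n : ℝ) ≤ 2 * d := by
    have : n ≤ 2 * d := by omega
    exact_mod_cast this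
  have hdpos : (0:ℝ) < (d:ℝ) := by exact_mod_cast hd0
  have hnpos : (0:ℝ) < (n:ℝ) := by exact_mod_cast (by omega : 0 < n)
  have hdinv : (d : ℝ)⁻¹ ≤ 2 / n := by
    rw [inv_eq_one_div, div_le_div_iff₀ hdpos hnpos]
    linarith
  have hgg : wip (stationaryMeasure G) g g ≤ 2 / ((n : ℝ) * L) := by
    have h1 : L * wip (stationaryMeasure G) g g ≤ 2 / n := le_trans (le_trans hmain hQj) hdinv
    rw [show (2:ℝ) / ((n : ℝ) * L) = (2 / (n:ℝ)) / L by rw [div_div]]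
    rw [le_div_iff₀ hL]
    linarith
  have hsum_eq : ∑ x : V, (inner ℝ (T x) θ : ℝ) ^ 2 * (stationaryMeasure G) x = wip (stationaryMeasure G) g g := by
    unfold wip
    refine Finset.sum_congr rfl fun x _ => ?_
    rw [hgdef]
    ring
  have hn0 : (0:ℝ) < n := by positivity
  have erpow : ∀ x : ℝ, 0 ≤ x → x ^ (-(1/2) : ℝ) = (Real.sqrt x)⁻¹ := by
    intro x hx
    rw [Real.rpow_neg hx, ← Real.sqrt_eq_rpow]
  have e2 : Real.sqrt (2 / ((n : ℝ) * L)) = Real.sqrt 2 * (Real.sqrt n)⁻¹ * (Real.sqrt L)⁻¹ := by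
    rw [show (2:ℝ) / ((n:ℝ) * L) = 2 * (n:ℝ)⁻¹ * L⁻¹ by field_simp]
    rw [Real.sqrt_mul (by positivity), Real.sqrt_mul (by norm_num : (0:ℝ) ≤ 2),
      Real.sqrt_inv, Real.sqrt_inv]
  have hsqrt2 : Real.sqrt 2 ≤ 2 := by
    nlinarith [Real.sq_sqrt (by norm_num : (0:ℝ) ≤ 2), Real.sqrt_nonneg 2]
  calc Real.sqrt (∑ x : V, (inner ℝ (T x) θ : ℝ) ^ 2 * (stationaryMeasure G) x)
      ≤ Real.sqrt (2 / ((n : ℝ) * L)) := by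
        rw [hsum_eq]
        exact Real.sqrt_le_sqrt hgg
    _ = Real.sqrt 2 * (Real.sqrt n)⁻¹ * (Real.sqrt L)⁻¹ := e2
    _ ≤ 2 * (Real.sqrt n)⁻¹ * (Real.sqrt L)⁻¹ := by
        have h1 : (0:ℝ) ≤ (Real.sqrt n)⁻¹ := by positivity
        have h2 : (0:ℝ) ≤ (Real.sqrt L)⁻¹ := by positivity
        gcongr
    _ = 2 * (n : ℝ) ^ (-(1/2) : ℝ) * L ^ (-(1/2) : ℝ) := by
        rw [erpow _ hn0.le, erpow _ hL.le]
end

section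
/- There is an absolute constant c > 0 such that the following holds. Let X be a finite set with at least two points, equipped with the metric m(x,y) = 1 for all x ≠ y and with the uniform probability measure μ on X. Then for every integer n > 1 and every Lipschitz map T : X → ℝⁿ with Lipschitz constant at most 1, there exists a unit vector θ ∈ S^{n−1} such that (∑_{x∈X} ⟨T(x), θ⟩² μ(x))^{1/2} ≤ c/√n. In particular, the bound does not depend on the cardinality of X. -/
open Finset in
/-- **Discrete space example.** There is an absolute constant `c > 0` such that for every
finite set `X` with at least two points, carrying the discrete metric (`m x y = 1` for
`x ≠ y`) and the uniform probability measure, every `n > 1` and every Lipschitz map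
`T : X → ℝⁿ` (i.e. `‖T x - T y‖ ≤ 1` for all `x ≠ y`), there is a unit vector `θ ∈ Sⁿ⁻¹`
with `(∑_x ⟨T x, θ⟩² / |X|)^{1/2} ≤ c / √n`. The bound does not depend on `|X|`. -/
theorem discrete_space_projection :
    ∃ c : ℝ, 0 < c ∧
      ∀ (X : Type) [Fintype X], 2 ≤ Fintype.card X →
        ∀ (n : ℕ), 1 < n →
          ∀ T : X → EuclideanSpace ℝ (Fin n),
            (∀ x y : X, x ≠ y → ‖T x - T y‖ ≤ 1) →
            ∃ θ : EuclideanSpace ℝ (Fin n), ‖θ‖ = 1 ∧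
              Real.sqrt (∑ x : X, (inner ℝ (T x) θ : ℝ) ^ 2 / (Fintype.card X : ℝ)) ≤
                c / Real.sqrt n := by
  refine ⟨2, by norm_num, ?_⟩
  intro X _ hX n hn T hT
  have hXpos : 0 < (Fintype.card X : ℝ) := by positivity
  have hXne : Nonempty X := Fintype.card_pos_iff.mp (by omega)
  obtain ⟨x₀⟩ := hXne
  set v₀ : EuclideanSpace ℝ (Fin n) := T x₀ with hv₀
  set K : Submodule ℝ (EuclideanSpace ℝ (Fin n)) := (ℝ ∙ v₀)ᗮ with hK
  -- dimension of K is at least n - 1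
  have hdim : n - 1 ≤ Module.finrank ℝ K := by
    have h1 : Module.finrank ℝ (ℝ ∙ v₀) + Module.finrank ℝ K = n := by
      rw [hK, Submodule.finrank_add_finrank_orthogonal]
      exact finrank_euclideanSpace_fin
    have h2 : Module.finrank ℝ (ℝ ∙ v₀) ≤ 1 := by
      by_cases hv : v₀ = 0
      · rw [hv, Submodule.span_zero_singleton]; simp
      · rw [finrank_span_singleton hv]
    omega
  set m := Module.finrank ℝ K with hm
  have hmpos : 0 < m := by omega
  set b := stdOrthonormalBasis ℝ K
  set w : Fin m → EuclideanSpace ℝ (Fin n) := fun i => (b i : EuclideanSpace ℝ (Fin n)) with hw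
  have hworth : Orthonormal ℝ w := by
    rw [orthonormal_iff_ite]
    intro i j
    have := (orthonormal_iff_ite.mp b.orthonormal) i j
    rwa [Submodule.coe_inner] at this
  have hwK : ∀ i, w i ∈ K := fun i => (b i).2
  have hinner0 : ∀ i, (inner ℝ v₀ (w i) : ℝ) = 0 := by
    intro i
    have := hwK i
    rw [hK, Submodule.mem_orthogonal] at this
    exact this v₀ (Submodule.mem_span_singleton_self v₀)
  -- Bessel-type bound
  have key : ∑ i : Fin m, ∑ x : X, (inner ℝ (T x) (w i) : ℝ) ^ 2 ≤ Fintype.card X := by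
    rw [Finset.sum_comm]
    calc ∑ x : X, ∑ i : Fin m, (inner ℝ (T x) (w i) : ℝ) ^ 2
        ≤ ∑ x : X, (1 : ℝ) := by
          apply Finset.sum_le_sum
          intro x _
          have heq : ∀ i, (inner ℝ (T x) (w i) : ℝ) = inner ℝ (T x - v₀) (w i) := by
            intro i
            rw [inner_sub_left, hinner0 i, sub_zero]
          calc ∑ i : Fin m, (inner ℝ (T x) (w i) : ℝ) ^ 2
              = ∑ i : Fin m, ‖(inner ℝ (w i) (T x - v₀) : ℝ)‖ ^ 2 := by
                refine Finset.sum_congr rfl fun i _ => ?_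
                have h3 : (inner ℝ (w i) (T x - v₀) : ℝ) = inner ℝ (T x) (w i) := by
                  rw [real_inner_comm, inner_sub_left, hinner0 i, sub_zero]
                rw [h3, Real.norm_eq_abs, sq_abs]
            _ ≤ ‖T x - v₀‖ ^ 2 := hworth.sum_inner_products_le (T x - v₀)
            _ ≤ 1 := by
                by_cases hx : x = x₀
                · simp [hx, hv₀]
                · have := hT x x₀ hx
                  nlinarith [norm_nonneg (T x - v₀)]
      _ = Fintype.card X := by simp
  -- pigeonhole
  have hpig : ∃ i : Fin m, ∑ x : X, (inner ℝ (T x) (w i) : ℝ) ^ 2 ≤ Fintype.card X / m := by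
    have := Finset.exists_le_of_sum_le (s := (Finset.univ : Finset (Fin m)))
      (f := fun i => ∑ x : X, (inner ℝ (T x) (w i) : ℝ) ^ 2)
      (g := fun _ => (Fintype.card X : ℝ) / m)
      (Finset.univ_nonempty_iff.mpr ⟨⟨0, hmpos⟩⟩) ?_
    · obtain ⟨i, _, hi⟩ := this; exact ⟨i, hi⟩
    · rw [Finset.sum_const]
      simp only [Finset.card_univ, Fintype.card_fin, nsmul_eq_mul]
      rw [mul_div_cancel₀]
      · exact key
      · exact_mod_cast hmpos.ne'
  obtain ⟨i, hi⟩ := hpig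
  refine ⟨w i, hworth.1 i, ?_⟩
  have hsum : ∑ x : X, (inner ℝ (T x) (w i) : ℝ) ^ 2 / (Fintype.card X : ℝ) ≤ 4 / n := by
    rw [← Finset.sum_div]
    rw [div_le_div_iff₀ hXpos (by positivity)]
    have h1 : (n : ℝ) ≤ 2 * m := by
      have : n ≤ 2 * m := by omega
      exact_mod_cast this
    have h2 : ∑ x : X, (inner ℝ (T x) (w i) : ℝ) ^ 2 ≥ 0 := by positivity
    have hmR : (0:ℝ) < m := by exact_mod_cast hmpos
    calc (∑ x : X, (inner ℝ (T x) (w i) : ℝ) ^ 2) * n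
        ≤ (Fintype.card X / m) * n := by
          apply mul_le_mul_of_nonneg_right hi (by positivity)
      _ ≤ 4 * Fintype.card X := by
          rw [div_mul_eq_mul_div, div_le_iff₀ hmR]
          nlinarith
  calc Real.sqrt (∑ x : X, (inner ℝ (T x) (w i) : ℝ) ^ 2 / (Fintype.card X : ℝ))
      ≤ Real.sqrt (4 / n) := Real.sqrt_le_sqrt hsum
    _ = 2 / Real.sqrt n := by
        rw [Real.sqrt_div (by norm_num : (0:ℝ) ≤ 4),
          show Real.sqrt 4 = 2 by
            rw [show (4:ℝ) = 2 ^ 2 by norm_num, Real.sqrt_sq (by norm_num : (0:ℝ) ≤ 2)]]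
end
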